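/- Let r : D → ℝ³ be a smooth surface patch, a a fixed unit vector, L a constant, λ = L − ⟨r,a⟩, n the unit normal, and b = a − 2⟨a,n⟩n. Then the reflected front ρ = r + λ·b satisfies ⟨∂ᵢρ, b⟩ = 0 for i = 1,2, i.e. b is normal to the reflected front. -/

import Mathlib

open RealInnerProductSpace

/-- For a surface patch `r` with unit normal `n`, fixed unit incident direction `a`,
`λ = L − ⟨r,a⟩` and reflected direction `b = a − 2⟨a,n⟩n`, the reflected front
`ρ = r + λ b` has `b` as normal: `⟨∂ᵢρ, b⟩ = 0` in every direction. -/
theorem reflected_front_normal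
    (r n : (ℝ × ℝ) → EuclideanSpace ℝ (Fin 3))
    (a : EuclideanSpace ℝ (Fin 3)) (L : ℝ)
    (hr : Differentiable ℝ r) (hn : Differentiable ℝ n)
    (hnunit : ∀ u, ‖n u‖ = 1) (ha : ‖a‖ = 1)
    (hnormal : ∀ u e, ⟪fderiv ℝ r u e, n u⟫ = 0)
    (lam : (ℝ × ℝ) → ℝ) (hlam : ∀ u, lam u = L - ⟪r u, a⟫)
    (b : (ℝ × ℝ) → EuclideanSpace ℝ (Fin 3))
    (hb : ∀ u, b u = a - (2 * ⟪a, n u⟫) • n u)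
    (ρ : (ℝ × ℝ) → EuclideanSpace ℝ (Fin 3))
    (hρ : ∀ u, ρ u = r u + lam u • b u) :
    ∀ u e, ⟪fderiv ℝ ρ u e, b u⟫ = 0 := by
  have hbfun : b = fun u => a - (2 * ⟪a, n u⟫) • n u := funext hb
  have hlamfun : lam = fun u => L - ⟪r u, a⟫ := funext hlam
  have hρfun : ρ = fun u => r u + lam u • b u := funext hρ
  subst hρfun hbfun hlamfun
  have haa : ⟪a, a⟫ = 1 := by
    rw [real_inner_self_eq_norm_sq, ha]; norm_num
  have hnn : ∀ v, ⟪n v, n v⟫ = 1 := by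
    intro v; rw [real_inner_self_eq_norm_sq, hnunit]; norm_num
  have hdb : Differentiable ℝ fun u => a - (2 * ⟪a, n u⟫) • n u := by
    apply (differentiable_const a).sub
    exact (((differentiable_const (2:ℝ)).mul
      ((differentiable_const a).inner ℝ hn)).smul hn)
  have hdlam : Differentiable ℝ fun u => L - ⟪r u, a⟫ :=
    (differentiable_const L).sub (hr.inner ℝ (differentiable_const a))
  intro u e
  set b : (ℝ × ℝ) → EuclideanSpace ℝ (Fin 3) := fun u => a - (2 * ⟪a, n u⟫) • n u with hbdef
  set lam : (ℝ × ℝ) → ℝ := fun u => L - ⟪r u, a⟫ with hlamdef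
  -- b is unit
  have hbb : ∀ v, ⟪b v, b v⟫ = 1 := by
    intro v
    simp only [hbdef, inner_sub_left, inner_sub_right, real_inner_smul_left,
      real_inner_smul_right, haa, hnn, real_inner_comm (n v) a]
    ring
  -- derivative of ⟪b,b⟫ is 0
  have hdbb : ⟪fderiv ℝ b u e, b u⟫ = 0 := by
    have h1 : (fun v => ⟪b v, b v⟫) = fun _ => (1:ℝ) := funext hbb
    have h2 : fderiv ℝ (fun v => ⟪b v, b v⟫) u e = 2 * ⟪fderiv ℝ b u e, b u⟫ := by
      rw [fderiv_inner_apply ℝ (hdb u) (hdb u), real_inner_comm]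
      ring
    rw [h1] at h2
    simp only [fderiv_fun_const, Pi.zero_apply, ContinuousLinearMap.zero_apply] at h2
    linarith
  -- derivative of lam
  have hdl : fderiv ℝ lam u e = -⟪fderiv ℝ r u e, a⟫ := by
    rw [hlamdef, fderiv_const_sub]
    rw [ContinuousLinearMap.neg_apply,
      fderiv_inner_apply ℝ (hr u) (differentiableAt_const a)]
    simp
  -- fderiv of ρ
  have hdrho : fderiv ℝ (fun v => r v + lam v • b v) u e
      = fderiv ℝ r u e + (fderiv ℝ lam u e) • b u + lam u • fderiv ℝ b u e := by
    rw [fderiv_fun_add (g := fun v => lam v • b v) (hr u) ((hdlam u).smul (hdb u)),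
      fderiv_fun_smul (hdlam u) (hdb u)]
    simp only [ContinuousLinearMap.add_apply, ContinuousLinearMap.coe_smul',
      Pi.smul_apply, ContinuousLinearMap.smulRight_apply]
    abel
  rw [hdrho]
  have hrb : ⟪fderiv ℝ r u e, b u⟫ = ⟪fderiv ℝ r u e, a⟫ := by
    simp only [hbdef, inner_sub_right, real_inner_smul_right, hnormal u e]
    ring
  simp only [inner_add_left, real_inner_smul_left, hdl, hrb, hbb, hdbb]
  ring
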